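/- arXiv:1901.10886 — 2 statements merged into one kernel-verified Lean document; each statement's English description precedes it below -/
import Mathlib

section
/- For all n ∈ ℤ⁺ and all real r with 0 < r ≤ 1, (r² + 10r + 1)·(Σ_{k=1}^{n} r^k)²·(Σ_{k=1}^{n} k² r^k) ≥ r² · (Σ_{k=1}^{n} k⁴ r^k). -/
open Finset

noncomputable def cc (m : ℕ) : ℝ := ((m:ℝ)-1)^2*(((m:ℝ)-1)^2-1)/12

lemma cc_nonneg (m : ℕ) : 0 ≤ cc m := by
  match m with
  | 0 => norm_num [cc]
  | 1 => norm_num [cc]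
  | (m+2) =>
    unfold cc
    push_cast
    have h : (0:ℝ) ≤ (m:ℝ) := Nat.cast_nonneg m
    have e : ((m:ℝ)+2-1)^2*(((m:ℝ)+2-1)^2-1) = ((m:ℝ)+1)^2*((m:ℝ)^2+2*(m:ℝ)) := by ring
    rw [e]
    positivity

lemma cc_id (m : ℕ) : cc m + 10*cc (m+1) + cc (m+2) = (m:ℝ)^4 := by
  unfold cc; push_cast; ring

lemma sumsq (t : ℕ) : ∑ k ∈ Icc 1 t, (k:ℝ)^2 = t*(t+1)*(2*t+1)/6 := by
  induction t with
  | zero => simp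
  | succ t ih =>
    rw [Finset.sum_Icc_succ_top (by omega), ih]
    push_cast; ring

lemma gval (t : ℕ) : ∑ k ∈ Icc 1 t, (k:ℝ)^2*((t:ℝ)+1-(k:ℝ)) = cc (t+2) := by
  induction t with
  | zero => norm_num [cc]
  | succ t ih =>
    have h1 : ∑ k ∈ Icc 1 (t+1), (k:ℝ)^2*(((t+1:ℕ):ℝ)+1-(k:ℝ))
        = (∑ k ∈ Icc 1 (t+1), (k:ℝ)^2*((t:ℝ)+1-(k:ℝ))) + ∑ k ∈ Icc 1 (t+1), (k:ℝ)^2 := by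
      rw [← Finset.sum_add_distrib]
      refine Finset.sum_congr rfl fun k _ => by push_cast; ring
    have h2 : ∑ k ∈ Icc 1 (t+1), (k:ℝ)^2*((t:ℝ)+1-(k:ℝ))
        = ∑ k ∈ Icc 1 t, (k:ℝ)^2*((t:ℝ)+1-(k:ℝ)) := by
      rw [Finset.sum_Icc_succ_top (by omega)]
      push_cast; ring
    rw [h1, h2, ih, sumsq]
    unfold cc; push_cast; ring

lemma shiftcc (r : ℝ) (d a b : ℕ) :
    ∑ k ∈ Icc a b, cc (k+d) * r^(k+d) = ∑ m ∈ Icc (a+d) (b+d), cc m * r^m := by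
  rw [← Finset.map_add_right_Icc a b d, Finset.sum_map]
  simp [addRightEmbedding]

lemma L1' (r : ℝ) (n : ℕ) :
    ∑ s ∈ Icc 2 (n+1), ((s:ℝ)-1)*r^s
      = ∑ i ∈ Icc 1 n, r^i * ∑ j ∈ Icc 1 (n+1-i), r^j := by
  induction n with
  | zero => simp
  | succ n ih =>
    have hL : ∑ s ∈ Icc 2 (n+1+1), ((s:ℝ)-1)*r^s
        = (∑ s ∈ Icc 2 (n+1), ((s:ℝ)-1)*r^s) + ((n:ℝ)+1)*r^(n+2) := by
      rw [Finset.sum_Icc_succ_top (by omega)]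
      push_cast; ring
    have hsplit : ∀ i ∈ Icc 1 n,
        r^i * ∑ j ∈ Icc 1 (n+1+1-i), r^j
          = r^i * ∑ j ∈ Icc 1 (n+1-i), r^j + r^(n+2) := by
      intro i hi
      simp only [Finset.mem_Icc] at hi
      have e : n+1+1-i = (n+1-i)+1 := by omega
      rw [e, Finset.sum_Icc_succ_top (by omega), mul_add, ← pow_add]
      congr 2
      omega
    have hR : ∑ i ∈ Icc 1 (n+1), r^i * ∑ j ∈ Icc 1 (n+1+1-i), r^j
        = (∑ i ∈ Icc 1 n, r^i * ∑ j ∈ Icc 1 (n+1-i), r^j) + ((n:ℝ)+1)*r^(n+2) := by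
      rw [Finset.sum_Icc_succ_top (by omega), Finset.sum_congr rfl hsplit,
        Finset.sum_add_distrib, Finset.sum_const, Nat.card_Icc]
      have e1 : n+1+1-(n+1) = 1 := by omega
      rw [e1]
      have e2 : ∑ j ∈ Icc 1 1, r^j = r := by simp
      rw [e2]
      have e3 : n + 1 - 1 = n := by omega
      rw [e3, nsmul_eq_mul]
      have e4 : r^(n+1) * r = r^(n+2) := by rw [← pow_succ]
      rw [e4]
      ring
    rw [hL, hR, ih]

lemma QR (r : ℝ) (n : ℕ) :
    ∑ m ∈ Icc 1 (n+2), cc m * r^m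
      = ∑ k ∈ Icc 1 n, (k:ℝ)^2 * r^k * ∑ s ∈ Icc 2 (n+2-k), ((s:ℝ)-1)*r^s := by
  induction n with
  | zero =>
    rw [show (0+2) = 1+1 from rfl, Finset.sum_Icc_succ_top (by omega)]
    norm_num [cc]
  | succ n ih =>
    have hL : ∑ m ∈ Icc 1 (n+1+2), cc m * r^m
        = (∑ m ∈ Icc 1 (n+2), cc m * r^m) + cc (n+3) * r^(n+3) := by
      rw [show n+1+2 = (n+2)+1 from rfl, Finset.sum_Icc_succ_top (by omega)]
    have hsplit : ∀ k ∈ Icc 1 n,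
        (k:ℝ)^2 * r^k * ∑ s ∈ Icc 2 (n+1+2-k), ((s:ℝ)-1)*r^s
          = (k:ℝ)^2 * r^k * ∑ s ∈ Icc 2 (n+2-k), ((s:ℝ)-1)*r^s
            + (k:ℝ)^2*(((n:ℝ)+2)-(k:ℝ)) * r^(n+3) := by
      intro k hk
      simp only [Finset.mem_Icc] at hk
      have e : n+1+2-k = (n+2-k)+1 := by omega
      rw [e, Finset.sum_Icc_succ_top (by omega), mul_add]
      have c1 : ((n+2-k+1:ℕ):ℝ) = (n:ℝ)+3-(k:ℝ) := by
        rw [Nat.cast_add, Nat.cast_sub (by omega : k ≤ n+2)]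
        push_cast; ring
      have c2 : r^k * r^(n+2-k+1) = r^(n+3) := by
        rw [← pow_add]
        congr 1
        omega
      rw [c1]
      congr 1
      calc (k:ℝ)^2 * r^k * (((n:ℝ)+3-(k:ℝ)-1) * r^(n+2-k+1))
          = ((k:ℝ)^2*(((n:ℝ)+2)-(k:ℝ))) * (r^k * r^(n+2-k+1)) := by ring
        _ = (k:ℝ)^2*(((n:ℝ)+2)-(k:ℝ)) * r^(n+3) := by rw [c2]
    have g1 : ∑ k ∈ Icc 1 n, (k:ℝ)^2*(((n:ℝ)+2)-(k:ℝ)) = cc (n+3) - ((n:ℝ)+1)^2 := by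
      have hg := gval (n+1)
      rw [Finset.sum_Icc_succ_top (by omega)] at hg
      have e : ∑ k ∈ Icc 1 n, (k:ℝ)^2*(((n:ℝ)+2)-(k:ℝ))
          = ∑ k ∈ Icc 1 n, (k:ℝ)^2*(((n+1:ℕ):ℝ)+1-(k:ℝ)) := by
        refine Finset.sum_congr rfl fun k _ => by push_cast; ring
      rw [e]
      have e2 : ((n+1:ℕ):ℝ)^2*(((n+1:ℕ):ℝ)+1-((n+1:ℕ):ℝ)) = ((n:ℝ)+1)^2 := by
        push_cast; ring
      rw [e2] at hg
      have e3 : n+1+2 = n+3 := by omega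
      rw [e3] at hg
      linarith
    have hR : ∑ k ∈ Icc 1 (n+1), (k:ℝ)^2 * r^k * ∑ s ∈ Icc 2 (n+1+2-k), ((s:ℝ)-1)*r^s
        = (∑ k ∈ Icc 1 n, (k:ℝ)^2 * r^k * ∑ s ∈ Icc 2 (n+2-k), ((s:ℝ)-1)*r^s)
          + cc (n+3) * r^(n+3) := by
      rw [Finset.sum_Icc_succ_top (by omega), Finset.sum_congr rfl hsplit,
        Finset.sum_add_distrib, ← Finset.sum_mul, g1]
      have e5 : n+1+2-(n+1) = 2 := by omega
      rw [e5]
      have e6 : ∑ s ∈ Icc (2:ℕ) 2, ((s:ℝ)-1)*r^s = r^2 := by norm_num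
      rw [e6]
      push_cast
      ring
    rw [hL, hR, ih]

theorem stmt7 (n : ℕ) (hn : 1 ≤ n) (r : ℝ) (hr0 : 0 < r) (hr1 : r ≤ 1) :
    (r ^ 2 + 10 * r + 1) * (∑ k ∈ Finset.Icc 1 n, r ^ k) ^ 2
        * (∑ k ∈ Finset.Icc 1 n, (k : ℝ) ^ 2 * r ^ k)
      ≥ r ^ 2 * (∑ k ∈ Finset.Icc 1 n, (k : ℝ) ^ 4 * r ^ k) := by
  have hr : (0:ℝ) ≤ r := hr0.le
  set S0 := ∑ k ∈ Finset.Icc 1 n, r ^ k with hS0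
  set S2 := ∑ k ∈ Finset.Icc 1 n, (k:ℝ)^2 * r^k with hS2
  set S4 := ∑ k ∈ Finset.Icc 1 n, (k:ℝ)^4 * r^k with hS4
  have hS0nonneg : 0 ≤ S0 := Finset.sum_nonneg fun k _ => pow_nonneg hr k
  have hS2nonneg : 0 ≤ S2 := Finset.sum_nonneg fun k _ => by positivity
  have hW : ∑ s ∈ Icc 2 (n+1), ((s:ℝ)-1)*r^s ≤ S0^2 := by
    rw [L1']
    have step : ∀ i ∈ Icc 1 n, r^i * ∑ j ∈ Icc 1 (n+1-i), r^j ≤ r^i * S0 := by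
      intro i hi
      simp only [Finset.mem_Icc] at hi
      refine mul_le_mul_of_nonneg_left ?_ (pow_nonneg hr i)
      rw [hS0]
      refine Finset.sum_le_sum_of_subset_of_nonneg
        (Finset.Icc_subset_Icc le_rfl (by omega)) fun j _ _ => pow_nonneg hr j
    calc ∑ i ∈ Icc 1 n, r^i * ∑ j ∈ Icc 1 (n+1-i), r^j
        ≤ ∑ i ∈ Icc 1 n, r^i * S0 := Finset.sum_le_sum step
      _ = S0^2 := by rw [← Finset.sum_mul, ← hS0]; ring
  have hQle : ∑ m ∈ Icc 1 (n+2), cc m * r^m ≤ S0^2 * S2 := by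
    rw [QR]
    have step : ∀ k ∈ Icc 1 n,
        (k:ℝ)^2 * r^k * ∑ s ∈ Icc 2 (n+2-k), ((s:ℝ)-1)*r^s
          ≤ (k:ℝ)^2 * r^k * S0^2 := by
      intro k hk
      simp only [Finset.mem_Icc] at hk
      refine mul_le_mul_of_nonneg_left ?_ (by positivity)
      refine le_trans ?_ hW
      refine Finset.sum_le_sum_of_subset_of_nonneg
        (Finset.Icc_subset_Icc le_rfl (by omega)) fun s hs _ => ?_
      simp only [Finset.mem_Icc] at hs
      have h2s : (2:ℝ) ≤ (s:ℝ) := by exact_mod_cast hs.1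
      have : (0:ℝ) ≤ (s:ℝ)-1 := by linarith
      exact mul_nonneg this (pow_nonneg hr s)
    calc ∑ k ∈ Icc 1 n, (k:ℝ)^2 * r^k * ∑ s ∈ Icc 2 (n+2-k), ((s:ℝ)-1)*r^s
        ≤ ∑ k ∈ Icc 1 n, (k:ℝ)^2 * r^k * S0^2 := Finset.sum_le_sum step
      _ = S0^2 * S2 := by rw [← Finset.sum_mul, ← hS2]; ring
  have h1toQ : ∑ k ∈ Icc 1 n, cc k * r^k ≤ ∑ m ∈ Icc 1 (n+2), cc m * r^m :=
    Finset.sum_le_sum_of_subset_of_nonneg (Finset.Icc_subset_Icc le_rfl (by omega))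
      fun m _ _ => mul_nonneg (cc_nonneg m) (pow_nonneg hr m)
  have h2toQ : ∑ k ∈ Icc 1 n, cc (k+1) * r^(k+1) ≤ ∑ m ∈ Icc 1 (n+2), cc m * r^m := by
    rw [shiftcc r 1 1 n]
    exact Finset.sum_le_sum_of_subset_of_nonneg (Finset.Icc_subset_Icc (by omega) (by omega))
      fun m _ _ => mul_nonneg (cc_nonneg m) (pow_nonneg hr m)
  have h3toQ : ∑ k ∈ Icc 1 n, cc (k+2) * r^(k+2) ≤ ∑ m ∈ Icc 1 (n+2), cc m * r^m := by
    rw [shiftcc r 2 1 n]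
    exact Finset.sum_le_sum_of_subset_of_nonneg (Finset.Icc_subset_Icc (by omega) (by omega))
      fun m _ _ => mul_nonneg (cc_nonneg m) (pow_nonneg hr m)
  have e1 : r^2 * S4
      = (∑ k ∈ Icc 1 n, r^2 * (cc k * r^k))
        + (∑ k ∈ Icc 1 n, 10*r*(cc (k+1) * r^(k+1)))
        + (∑ k ∈ Icc 1 n, cc (k+2) * r^(k+2)) := by
    rw [hS4, Finset.mul_sum, ← Finset.sum_add_distrib, ← Finset.sum_add_distrib]
    refine Finset.sum_congr rfl fun k _ => ?_
    rw [← cc_id k]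
    ring
  have hA : r^2 * S4 ≤ (r^2+10*r+1) * (∑ m ∈ Icc 1 (n+2), cc m * r^m) := by
    rw [e1]
    have c1 : ∑ k ∈ Icc 1 n, r^2 * (cc k * r^k)
        ≤ r^2 * ∑ m ∈ Icc 1 (n+2), cc m * r^m := by
      rw [← Finset.mul_sum]
      exact mul_le_mul_of_nonneg_left h1toQ (by positivity)
    have c2 : ∑ k ∈ Icc 1 n, 10*r*(cc (k+1) * r^(k+1))
        ≤ 10*r * ∑ m ∈ Icc 1 (n+2), cc m * r^m := by
      rw [← Finset.mul_sum]
      exact mul_le_mul_of_nonneg_left h2toQ (by positivity)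
    have hQnn : 0 ≤ ∑ m ∈ Icc 1 (n+2), cc m * r^m :=
      Finset.sum_nonneg fun m _ => mul_nonneg (cc_nonneg m) (pow_nonneg hr m)
    nlinarith [h3toQ]
  have final : r^2 * S4 ≤ (r^2+10*r+1) * (S0^2 * S2) := by
    calc r^2 * S4 ≤ (r^2+10*r+1) * (∑ m ∈ Icc 1 (n+2), cc m * r^m) := hA
      _ ≤ (r^2+10*r+1) * (S0^2 * S2) := by
          refine mul_le_mul_of_nonneg_left hQle (by positivity)
  calc (r^2+10*r+1) * S0^2 * S2 = (r^2+10*r+1) * (S0^2 * S2) := by ring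
    _ ≥ r^2 * S4 := final
end

section
/- Let a ≥ c ≥ d ≥ b > 0 be reals with c + d ≥ a + b, and let 0 < r ≤ 1. Then r^{(c+d-a-b)/2}·(1-r^a)(1-r^b)/((1-r^c)(1-r^d)) ≤ b/(c+d-a), with the left side interpreted as its limit ab/(cd) when r = 1. -/
open Real

private lemma exp_aux3 (p q w s1 s2 : ℝ) :
    Real.exp p * (Real.exp q * s1) * (Real.exp w * s2) = Real.exp (p + q + w) * (s1 * s2) := by
  rw [Real.exp_add, Real.exp_add]; ring

private lemma exp_aux2 (q w s1 s2 : ℝ) :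
    Real.exp q * s1 * (Real.exp w * s2) = Real.exp (q + w) * (s1 * s2) := by
  rw [Real.exp_add]; ring

private lemma sinh_le_mul_cosh {x : ℝ} (hx : 0 ≤ x) : Real.sinh x ≤ x * Real.cosh x := by
  have hmono : MonotoneOn (fun x : ℝ => x * Real.cosh x - Real.sinh x) (Set.Ici 0) := by
    apply monotoneOn_of_deriv_nonneg (convex_Ici 0)
    · exact ((continuous_id.mul Real.continuous_cosh).sub Real.continuous_sinh).continuousOn
    · intro y _
      exact (((differentiable_id.mul Real.differentiable_cosh).sub
        Real.differentiable_sinh) y).differentiableWithinAt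
    · intro y hy
      rw [interior_Ici] at hy
      have hd : HasDerivAt (fun x : ℝ => x * Real.cosh x - Real.sinh x)
          (1 * Real.cosh y + y * Real.sinh y - Real.cosh y) y :=
        ((hasDerivAt_id y).mul (Real.hasDerivAt_cosh y)).sub (Real.hasDerivAt_sinh y)
      rw [hd.deriv]
      have h1 : 0 < Real.sinh y := Real.sinh_pos_iff.mpr hy
      nlinarith [(show (0:ℝ) < y from hy).le]
  have := hmono (Set.self_mem_Ici (a := (0:ℝ))) hx hx
  simp only [Real.sinh_zero, Real.cosh_zero] at this
  linarith

private lemma sinh_div_mono {x y : ℝ} (hx : 0 < x) (hxy : x ≤ y) :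
    Real.sinh x * y ≤ Real.sinh y * x := by
  have hmono : MonotoneOn (fun y : ℝ => Real.sinh y * x - Real.sinh x * y) (Set.Ici x) := by
    apply monotoneOn_of_deriv_nonneg (convex_Ici x)
    · exact ((Real.continuous_sinh.mul continuous_const).sub
        (continuous_const.mul continuous_id)).continuousOn
    · intro y _
      exact (((Real.differentiable_sinh.mul (differentiable_const x)).sub
        ((differentiable_const _).mul differentiable_id)) y).differentiableWithinAt
    · intro y hy
      rw [interior_Ici] at hy
      have hd : HasDerivAt (fun y : ℝ => Real.sinh y * x - Real.sinh x * y)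
          (Real.cosh y * x - Real.sinh x * 1) y :=
        ((Real.hasDerivAt_sinh y).mul_const x).sub ((hasDerivAt_id y).const_mul (Real.sinh x))
      rw [hd.deriv]
      have h1 : Real.cosh x ≤ Real.cosh y := by
        rw [Real.cosh_le_cosh, abs_of_pos hx, abs_of_pos (hx.trans hy)]
        exact hy.le
      have h2 : Real.sinh x ≤ x * Real.cosh x := sinh_le_mul_cosh hx.le
      nlinarith [Real.cosh_pos (x := y)]
  have := hmono (Set.self_mem_Ici (a := x)) hxy hxy
  simp only at this
  linarith

private lemma sinh_prod_le {A C D E : ℝ} (hE : 0 < E) (hED : E ≤ D) (hDC : D ≤ C)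
    (hCA : C ≤ A) (hsum : A + E = C + D) :
    Real.sinh A * Real.sinh E ≤ Real.sinh C * Real.sinh D := by
  have key : ∀ X Y : ℝ, Real.sinh X * Real.sinh Y
      = (Real.cosh (X + Y) - Real.cosh (X - Y)) / 2 := by
    intro X Y
    rw [Real.cosh_add, Real.cosh_sub]; ring
  rw [key, key, hsum]
  have h1 : Real.cosh (C - D) ≤ Real.cosh (A - E) := by
    rw [Real.cosh_le_cosh, abs_of_nonneg (by linarith), abs_of_nonneg (by linarith)]
    linarith
  linarith

private lemma key_ineq {A B C D E : ℝ} (hB : 0 < B) (hBE : B ≤ E) (hED : E ≤ D) (hDC : D ≤ C)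
    (hCA : C ≤ A) (hsum : A + E = C + D) :
    Real.sinh A * Real.sinh B * E ≤ Real.sinh C * Real.sinh D * B := by
  have hE : 0 < E := hB.trans_le hBE
  have h1 : Real.sinh B * E ≤ Real.sinh E * B := sinh_div_mono hB hBE
  have h2 : Real.sinh A * Real.sinh E ≤ Real.sinh C * Real.sinh D := sinh_prod_le hE hED hDC hCA hsum
  have hA : 0 < Real.sinh A := Real.sinh_pos_iff.mpr (by linarith)
  nlinarith

theorem stmt13 (a b c d r : ℝ) (hb : 0 < b) (hdb : b ≤ d) (hcd : d ≤ c) (hac : c ≤ a)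
    (hsum : a + b ≤ c + d) (hr0 : 0 < r) (hr1 : r ≤ 1) :
    (if r = 1 then a * b / (c * d)
      else r ^ ((c + d - a - b) / 2) * (1 - r ^ a) * (1 - r ^ b)
            / ((1 - r ^ c) * (1 - r ^ d)))
      ≤ b / (c + d - a) := by
  have hd0 : 0 < d := hb.trans_le hdb
  have hc0 : 0 < c := hd0.trans_le hcd
  have ha0 : 0 < a := hc0.trans_le hac
  have hda : d ≤ a := hcd.trans hac
  have he : 0 < c + d - a := by linarith
  by_cases h1 : r = 1
  · rw [if_pos h1]
    rw [div_le_div_iff₀ (by positivity) he]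
    nlinarith [mul_nonneg (mul_nonneg hb.le (sub_nonneg.2 hac)) (sub_nonneg.2 hda)]
  · rw [if_neg h1]
    have hr1' : r < 1 := lt_of_le_of_ne hr1 h1
    set t : ℝ := -Real.log r with ht
    have ht0 : 0 < t := by
      simp only [ht, neg_pos]
      exact Real.log_neg hr0 hr1'
    have hrpow : ∀ x : ℝ, r ^ x = Real.exp (-(t * x)) := by
      intro x
      rw [Real.rpow_def_of_pos hr0]
      rw [ht]; congr 1; ring
    have hfact : ∀ x : ℝ, 1 - r ^ x = Real.exp (-(t * x / 2)) * (2 * Real.sinh (t * x / 2)) := by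
      intro x
      rw [hrpow, Real.sinh_eq]
      have h2 : Real.exp (-(t * x / 2)) * Real.exp (t * x / 2) = 1 := by
        rw [← Real.exp_add]; simp
      have h3 : Real.exp (-(t * x / 2)) * Real.exp (-(t * x / 2)) = Real.exp (-(t * x)) := by
        rw [← Real.exp_add]; ring_nf
      linear_combination h3 - h2
    set A := t * a / 2 with hA
    set B := t * b / 2 with hB'
    set C := t * c / 2 with hC
    set D := t * d / 2 with hD
    set E := t * (c + d - a) / 2 with hE
    have hB : 0 < B := by positivity
    have hBE : B ≤ E := by rw [hB', hE]; nlinarith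
    have hED : E ≤ D := by rw [hE, hD]; nlinarith
    have hDC : D ≤ C := by rw [hD, hC]; nlinarith
    have hCA : C ≤ A := by rw [hC, hA]; nlinarith
    have hsum2 : A + E = C + D := by rw [hA, hE, hC, hD]; ring
    have hsC : 0 < Real.sinh C := Real.sinh_pos_iff.mpr (by positivity)
    have hsD : 0 < Real.sinh D := Real.sinh_pos_iff.mpr (by positivity)
    have hE0 : 0 < E := hB.trans_le hBE
    have key := key_ineq hB hBE hED hDC hCA hsum2
    have hnum : r ^ ((c + d - a - b) / 2) * (1 - r ^ a) * (1 - r ^ b)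
        = Real.exp (-(t * ((c + d - a - b) / 2)) + -(t * a / 2) + -(t * b / 2))
          * (2 * Real.sinh A * (2 * Real.sinh B)) := by
      rw [hrpow, hfact, hfact, exp_aux3]
    have hden : (1 - r ^ c) * (1 - r ^ d)
        = Real.exp (-(t * c / 2) + -(t * d / 2))
          * (2 * Real.sinh C * (2 * Real.sinh D)) := by
      rw [hfact, hfact, exp_aux2]
    have hexp_eq : -(t * ((c + d - a - b) / 2)) + -(t * a / 2) + -(t * b / 2)
        = -(t * c / 2) + -(t * d / 2) := by ring
    have hLHS : r ^ ((c + d - a - b) / 2) * (1 - r ^ a) * (1 - r ^ b)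
        / ((1 - r ^ c) * (1 - r ^ d))
        = 2 * Real.sinh A * (2 * Real.sinh B) / (2 * Real.sinh C * (2 * Real.sinh D)) := by
      rw [hnum, hden, hexp_eq, mul_div_mul_left _ _ (Real.exp_ne_zero _)]
    rw [hLHS]
    have hbE : b / (c + d - a) = B / E := by
      rw [hB', hE, div_eq_div_iff he.ne' (by positivity : t * (c + d - a) / 2 ≠ 0)]
      ring
    rw [hbE, div_le_div_iff₀ (by positivity) hE0]
    linarith [key]
end
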